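/- Let t ∈ [0,1] and w ∈ ℂ. There exists ε > 0 such that for all complex z with |z| < ε, the series Σ_{k≥1} P_k^{(t)}(w) z^k/k converges and exp( − Σ_{k≥1} P_k^{(t)}(w) z^k / k ) = 1 + t z² − z w. -/

import Mathlib

open Polynomial

/-- The modified Chebyshev polynomials in `ℂ[X]` for a real parameter `t`:
`P₀ = 2`, `P₁ = X`, `P_{k+2} = X·P_{k+1} − t·P_k`. -/
noncomputable def modCheb (t : ℝ) : ℕ → Polynomial ℂ
  | 0 => 2
  | 1 => Polynomial.X
  | (k + 2) => Polynomial.X * modCheb t (k + 1) - Polynomial.C (t : ℂ) * modCheb t k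

lemma modCheb_eval (t : ℝ) (a b : ℂ) (hab : a * b = (t : ℂ)) :
    ∀ k, (modCheb t k).eval (a + b) = a ^ k + b ^ k := by
  intro k
  induction k using Nat.strong_induction_on with
  | _ k ih =>
    match k with
    | 0 => simp [modCheb]; norm_num
    | 1 => simp [modCheb]
    | (k + 2) =>
      have h1 := ih (k + 1) (by omega)
      have h0 := ih k (by omega)
      simp only [modCheb, eval_sub, eval_mul, eval_X, eval_C, h1, h0, ← hab]
      ring

lemma log_series (x : ℂ) (hx : ‖x‖ < 1) :
    HasSum (fun k : ℕ => x ^ (k + 1) / (k + 1)) (-Complex.log (1 - x)) := by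
  have h := Complex.hasSum_taylorSeries_neg_log (z := x) hx
  have h2 := (hasSum_nat_add_iff' (f := fun n : ℕ => x ^ n / n) 1).2 h
  simp only [Finset.range_one, Finset.sum_singleton, Nat.cast_zero, pow_zero, div_zero,
    sub_zero] at h2
  convert h2 using 2 with k
  case e'_3 => rfl
  push_cast
  ring

/-- For `t ∈ [0,1]` and `w ∈ ℂ`, there is `ε > 0` such that for `|z| < ε` the series
`Σ_{k≥1} P_k^{(t)}(w) z^k/k` converges and
`exp(−Σ_{k≥1} P_k^{(t)}(w) z^k/k) = 1 + t z² − z w`. -/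
theorem stmt_9 (t : ℝ) (ht0 : 0 ≤ t) (ht1 : t ≤ 1) (w : ℂ) :
    ∃ ε > (0 : ℝ), ∀ z : ℂ, ‖z‖ < ε →
      Summable (fun k : ℕ => (modCheb t (k + 1)).eval w * z ^ (k + 1) / (k + 1)) ∧
      Complex.exp (-∑' k : ℕ, (modCheb t (k + 1)).eval w * z ^ (k + 1) / (k + 1))
        = 1 + (t : ℂ) * z ^ 2 - z * w := by
  set s : ℂ := (w ^ 2 - 4 * t) ^ ((2 : ℕ)⁻¹ : ℂ) with hs
  have hs2 : s ^ 2 = w ^ 2 - 4 * t := Complex.cpow_nat_inv_pow _ two_ne_zero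
  set a : ℂ := (w + s) / 2
  set b : ℂ := (w - s) / 2
  have hab : a + b = w := by simp only [a, b]; ring
  have hmul : a * b = (t : ℂ) := by
    have : a * b = (w ^ 2 - s ^ 2) / 4 := by field_simp [a, b]; ring
    rw [this, hs2]; ring
  set M : ℝ := max ‖a‖ ‖b‖ + 1 with hM
  have hM1 : 1 ≤ M := by
    have := (norm_nonneg a).trans (le_max_left _ ‖b‖)
    linarith
  have hMpos : 0 < M := by linarith
  refine ⟨1 / M, by positivity, fun z hz => ?_⟩
  have haz : ‖a * z‖ < 1 := by
    rw [norm_mul]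
    calc ‖a‖ * ‖z‖ < M * (1 / M) := by
          apply mul_lt_mul' _ hz (norm_nonneg z) hMpos
          have := le_max_left ‖a‖ ‖b‖; linarith
      _ = 1 := by field_simp
  have hbz : ‖b * z‖ < 1 := by
    rw [norm_mul]
    calc ‖b‖ * ‖z‖ < M * (1 / M) := by
          apply mul_lt_mul' _ hz (norm_nonneg z) hMpos
          have := le_max_right ‖a‖ ‖b‖; linarith
      _ = 1 := by field_simp
  have hA := log_series (a * z) haz
  have hB := log_series (b * z) hbz
  have hsum : HasSum (fun k : ℕ => (modCheb t (k + 1)).eval w * z ^ (k + 1) / (k + 1))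
      (-Complex.log (1 - a * z) + -Complex.log (1 - b * z)) := by
    have := hA.add hB
    convert this using 2 with k
    rw [← hab, modCheb_eval t a b hmul]
    rw [mul_pow, mul_pow]
    ring
  refine ⟨hsum.summable, ?_⟩
  rw [hsum.tsum_eq]
  have hane : 1 - a * z ≠ 0 := by
    intro h
    have : a * z = 1 := by linear_combination -h
    rw [this] at haz; simp at haz
  have hbne : 1 - b * z ≠ 0 := by
    intro h
    have : b * z = 1 := by linear_combination -h
    rw [this] at hbz; simp at hbz
  rw [neg_add, neg_neg, neg_neg, Complex.exp_add, Complex.exp_log hane,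
    Complex.exp_log hbne]
  have : (1 - a * z) * (1 - b * z) = 1 + (a * b) * z ^ 2 - z * (a + b) := by ring
  rw [this, hmul, hab]
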